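/- Let p be a {0,1}-valued (n,n,n)-array. Construct 2-marginals for 3-arrays of size (3, n², 3n) as in the reduction from 3-dimensional matching (with U = 1, dom/row/col groups). Then the set of nonnegative real (n,n,n)-arrays x with all 1-marginals equal to 1 and x ≤ p entrywise is in bijection with the set of nonnegative real (3, n², 3n)-arrays y with the constructed 2-marginals, via x_{i,j,k} = y_{1,ij,dom k}, and this bijection preserves integrality. Consequently, a 3-dimensional matching dominated by p exists if and only if a nonnegative integer (3, n², 3n)-table with the constructed 2-marginals exists. -/
import Mathlib


/-- `U = min (max_i u1 i) (max_j u2 j)` of the Theorem 1.4 construction. -/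
def bigU (r c : ℕ) (u1 : Fin r → ℕ) (u2 : Fin c → ℕ) : ℕ :=
  min (Finset.univ.sup u1) (Finset.univ.sup u2)

open Sum in
/-- `v_{+,ij,gro k}` of the construction. -/
def margA (r c h : ℕ) (u1 : Fin r → ℕ) (u2 : Fin c → ℕ)
    (p : Fin r → Fin c → Fin h → ℕ) :
    Fin r × Fin c → (Fin h ⊕ Fin r ⊕ Fin c) → ℝ := fun a g =>
  match g with
  | inl k => (p a.1 a.2 k : ℝ)
  | inr (inl i) => if i = a.1 then (bigU r c u1 u2 : ℝ) else 0
  | inr (inr j) => if j = a.2 then (bigU r c u1 u2 : ℝ) else 0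

/-- `v_{t,ij,+}` of the construction. -/
def margT (r c h : ℕ) (u1 : Fin r → ℕ) (u2 : Fin c → ℕ)
    (p : Fin r → Fin c → Fin h → ℕ) :
    Fin 3 → Fin r × Fin c → ℝ := fun t a =>
  if t = 1 then ∑ k, (p a.1 a.2 k : ℝ) else (bigU r c u1 u2 : ℝ)

open Sum in
/-- `v_{t,+,gro k}` of the construction. -/
def margG (r c h : ℕ) (u1 : Fin r → ℕ) (u2 : Fin c → ℕ) (u3 : Fin h → ℕ)
    (p : Fin r → Fin c → Fin h → ℕ) :
    Fin 3 → (Fin h ⊕ Fin r ⊕ Fin c) → ℝ := fun t g =>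
  match g with
  | inl k => if t = 0 then (u3 k : ℝ)
      else if t = 1 then (∑ i, ∑ j, (p i j k : ℝ)) - (u3 k : ℝ) else 0
  | inr (inl i) => if t = 0 then (c : ℝ) * (bigU r c u1 u2 : ℝ) - (u1 i : ℝ)
      else if t = 1 then 0 else (u1 i : ℝ)
  | inr (inr j) => if t = 0 then 0
      else if t = 1 then (u2 j : ℝ)
      else (r : ℝ) * (bigU r c u1 u2 : ℝ) - (u2 j : ℝ)

open Sum Finset

lemma bigU_one {n : ℕ} (i : Fin n) :
    bigU n n (fun _ => 1) (fun _ => 1) = 1 := by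
  have h : (Finset.univ : Finset (Fin n)).Nonempty := ⟨i, Finset.mem_univ i⟩
  simp [bigU, Finset.sup_const h]

noncomputable def fwd (n : ℕ) (p : Fin n → Fin n → Fin n → ℕ)
    (x : Fin n → Fin n → Fin n → ℝ) :
    Fin 3 → Fin n × Fin n → (Fin n ⊕ Fin n ⊕ Fin n) → ℝ := fun t a g =>
  match g with
  | inl k => if t = 0 then x a.1 a.2 k
      else if t = 1 then (p a.1 a.2 k : ℝ) - x a.1 a.2 k else 0
  | inr (inl i) => if i = a.1 then
      (if t = 0 then 1 - ∑ k, x a.1 a.2 k else if t = 1 then 0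
        else ∑ k, x a.1 a.2 k) else 0
  | inr (inr j) => if j = a.2 then
      (if t = 0 then 0 else if t = 1 then ∑ k, x a.1 a.2 k
        else 1 - ∑ k, x a.1 a.2 k) else 0

lemma fwd_mem {n : ℕ} (p : Fin n → Fin n → Fin n → ℕ)
    (x : Fin n → Fin n → Fin n → ℝ)
    (h0 : ∀ i j k, 0 ≤ x i j k) (hle : ∀ i j k, x i j k ≤ (p i j k : ℝ))
    (hi : ∀ i, ∑ j, ∑ k, x i j k = 1) (hj : ∀ j, ∑ i, ∑ k, x i j k = 1)
    (hk : ∀ k, ∑ i, ∑ j, x i j k = 1) :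
    (∀ t a g, 0 ≤ fwd n p x t a g) ∧
    (∀ t a, ∑ g, fwd n p x t a g = margT n n n (fun _ => 1) (fun _ => 1) p t a) ∧
    (∀ t g, ∑ a, fwd n p x t a g =
      margG n n n (fun _ => 1) (fun _ => 1) (fun _ => 1) p t g) ∧
    (∀ a g, ∑ t, fwd n p x t a g = margA n n n (fun _ => 1) (fun _ => 1) p a g) := by
  have hs0 : ∀ i j, 0 ≤ ∑ k, x i j k := fun i j =>
    Finset.sum_nonneg fun k _ => h0 i j k
  have hs1 : ∀ i j, ∑ k, x i j k ≤ 1 := by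
    intro i j
    calc ∑ k, x i j k ≤ ∑ j', ∑ k, x i j' k :=
          Finset.single_le_sum (f := fun j' => ∑ k, x i j' k)
            (fun j' _ => hs0 i j') (Finset.mem_univ j)
      _ = 1 := hi i
  refine ⟨?_, ?_, ?_, ?_⟩
  · intro t a g
    match g with
    | inl k =>
      fin_cases t <;> simp [fwd]
      · exact h0 _ _ _
      · exact hle _ _ _
    | inr (inl i) =>
      fin_cases t <;> simp [fwd] <;> split <;>
        first
        | positivity
        | linarith [hs1 a.1 a.2, hs0 a.1 a.2]
    | inr (inr j) =>
      fin_cases t <;> simp [fwd] <;> split <;>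
        first
        | positivity
        | linarith [hs1 a.1 a.2, hs0 a.1 a.2]
  · intro t a
    have hU := bigU_one a.1
    fin_cases t <;>
      simp [fwd, margT, Fintype.sum_sum_type, Finset.sum_ite_eq', hU] <;> try ring
  · intro t g
    match g with
    | inl k =>
      have hU := bigU_one k
      fin_cases t <;>
        simp [fwd, margG, Fintype.sum_prod_type, hU] <;>
        exact hk k
    | inr (inl i) =>
      have hU := bigU_one i
      fin_cases t <;>
        simp [fwd, margG, Fintype.sum_prod_type, Finset.sum_ite_eq, hU] <;>
        exact hi i
    | inr (inr j) =>
      have hU := bigU_one j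
      fin_cases t <;>
        simp [fwd, margG, Fintype.sum_prod_type, Finset.sum_ite_eq, hU] <;>
        exact hj j
  · intro a g
    have hU := bigU_one a.1
    match g with
    | inl k =>
      simp [fwd, margA, Fin.sum_univ_three]
    | inr (inl i) =>
      simp [fwd, margA, Fin.sum_univ_three, hU]
    | inr (inr j) =>
      simp [fwd, margA, Fin.sum_univ_three, hU]

lemma bwd_spec {n : ℕ} (p : Fin n → Fin n → Fin n → ℕ)
    (y : Fin 3 → Fin n × Fin n → (Fin n ⊕ Fin n ⊕ Fin n) → ℝ)
    (hy0 : ∀ t a g, 0 ≤ y t a g)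
    (hT : ∀ t a, ∑ g, y t a g = margT n n n (fun _ => 1) (fun _ => 1) p t a)
    (hG : ∀ t g, ∑ a, y t a g =
      margG n n n (fun _ => 1) (fun _ => 1) (fun _ => 1) p t g)
    (hA : ∀ a g, ∑ t, y t a g = margA n n n (fun _ => 1) (fun _ => 1) p a g) :
    (∀ i j k, 0 ≤ y 0 (i,j) (inl k)) ∧
    (∀ i j k, y 0 (i,j) (inl k) ≤ (p i j k : ℝ)) ∧
    (∀ i, ∑ j, ∑ k, y 0 (i,j) (inl k) = 1) ∧
    (∀ j, ∑ i, ∑ k, y 0 (i,j) (inl k) = 1) ∧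
    (∀ k, ∑ i, ∑ j, y 0 (i,j) (inl k) = 1) ∧
    fwd n p (fun i j k => y 0 (i,j) (inl k)) = y := by
  -- zero entries from zero marginals
  have hzeroG : ∀ (t : Fin 3) g,
      margG n n n (fun _ => 1) (fun _ => 1) (fun _ => 1) p t g = 0 →
      ∀ a, y t a g = 0 := by
    intro t g h a
    have h2 := (hG t g).trans h
    exact (Finset.sum_eq_zero_iff_of_nonneg (fun a _ => hy0 t a g)).1 h2 a
      (Finset.mem_univ a)
  have h20 : ∀ a k, y 2 a (inl k) = 0 := fun a k =>
    hzeroG 2 (inl k) (by simp [margG]) a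
  have h1row : ∀ a i, y 1 a (inr (inl i)) = 0 := fun a i =>
    hzeroG 1 (inr (inl i)) (by simp [margG]) a
  have h0col : ∀ a j, y 0 a (inr (inr j)) = 0 := fun a j =>
    hzeroG 0 (inr (inr j)) (by simp [margG]) a
  have hoffrow : ∀ (t : Fin 3) a i, i ≠ a.1 → y t a (inr (inl i)) = 0 := by
    intro t a i hne
    have h2 := hA a (inr (inl i))
    simp [margA, hne] at h2
    exact (Finset.sum_eq_zero_iff_of_nonneg (fun t _ => hy0 t a (inr (inl i)))).1
      h2 t (Finset.mem_univ t)
  have hoffcol : ∀ (t : Fin 3) a j, j ≠ a.2 → y t a (inr (inr j)) = 0 := by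
    intro t a j hne
    have h2 := hA a (inr (inr j))
    simp [margA, hne] at h2
    exact (Finset.sum_eq_zero_iff_of_nonneg (fun t _ => hy0 t a (inr (inr j)))).1
      h2 t (Finset.mem_univ t)
  have hdom : ∀ a k, y 0 a (inl k) + y 1 a (inl k) = (p a.1 a.2 k : ℝ) := by
    intro a k
    have h2 := hA a (inl k)
    rw [Fin.sum_univ_three] at h2
    rw [h20 a k] at h2
    simpa [margA] using h2
  have hsumg : ∀ (t : Fin 3) a, ∑ g, y t a g =
      (∑ k, y t a (inl k)) + (∑ i, y t a (inr (inl i))) +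
      (∑ j, y t a (inr (inr j))) := by
    intro t a
    rw [Fintype.sum_sum_type, Fintype.sum_sum_type]; ring
  have hrowsum : ∀ (t : Fin 3) a,
      ∑ i, y t a (inr (inl i)) = y t a (inr (inl a.1)) :=
    fun t a => Finset.sum_eq_single a.1 (fun i _ hi => hoffrow t a i hi)
      (by simp)
  have hcolsum : ∀ (t : Fin 3) a,
      ∑ j, y t a (inr (inr j)) = y t a (inr (inr a.2)) :=
    fun t a => Finset.sum_eq_single a.2 (fun j _ hj => hoffcol t a j hj)
      (by simp)
  -- determined diagonal entries
  have hrow0 : ∀ a, y 0 a (inr (inl a.1)) = 1 - ∑ k, y 0 a (inl k) := by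
    intro a
    have h2 := hT 0 a
    rw [hsumg, hrowsum, hcolsum] at h2
    simp only [margT, bigU_one a.1] at h2
    norm_num at h2
    have h3 : ∑ j, y 0 a (inr (inr j)) = y 0 a (inr (inr a.2)) := hcolsum 0 a
    rw [h0col a a.2] at h2
    linarith
  have hrow2 : ∀ a, y 2 a (inr (inl a.1)) = ∑ k, y 0 a (inl k) := by
    intro a
    have h2 := hA a (inr (inl a.1))
    rw [Fin.sum_univ_three, h1row, hrow0 a] at h2
    simp [margA, bigU_one a.1] at h2
    linarith
  have hcol1 : ∀ a, y 1 a (inr (inr a.2)) = ∑ k, y 0 a (inl k) := by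
    intro a
    have h2 := hT 1 a
    rw [hsumg, hrowsum, hcolsum, h1row a a.1] at h2
    simp only [margT, if_pos rfl] at h2
    have h3 : ∑ k, y 1 a (inl k) =
        (∑ k, (p a.1 a.2 k : ℝ)) - ∑ k, y 0 a (inl k) := by
      rw [← Finset.sum_sub_distrib]
      exact Finset.sum_congr rfl fun k _ => by linarith [hdom a k]
    rw [h3] at h2
    norm_num at h2
    linarith
  have hcol2 : ∀ a, y 2 a (inr (inr a.2)) = 1 - ∑ k, y 0 a (inl k) := by
    intro a
    have h2 := hA a (inr (inr a.2))
    rw [Fin.sum_univ_three, h0col, hcol1 a] at h2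
    simp [margA, bigU_one a.2] at h2
    linarith
  -- marginals of x
  have hk' : ∀ k, ∑ i, ∑ j, y 0 (i,j) (inl k) = 1 := by
    intro k
    have h2 := hG 0 (inl k)
    rw [Fintype.sum_prod_type] at h2
    simpa [margG] using h2
  have hi' : ∀ i, ∑ j, ∑ k, y 0 (i,j) (inl k) = 1 := by
    intro i
    have h2 := hG 0 (inr (inl i))
    rw [Fintype.sum_prod_type] at h2
    rw [Finset.sum_eq_single i
      (fun i' _ hne => Finset.sum_eq_zero fun j _ =>
        hoffrow 0 (i',j) i (by simpa using hne.symm)) (by simp)] at h2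
    simp only [margG, if_pos rfl, bigU_one i] at h2
    have h3 : ∑ j, y 0 (i,j) (inr (inl i)) =
        ∑ j, (1 - ∑ k, y 0 (i,j) (inl k)) :=
      Finset.sum_congr rfl fun j _ => hrow0 (i,j)
    rw [h3, Finset.sum_sub_distrib] at h2
    simp at h2
    linarith
  have hj' : ∀ j, ∑ i, ∑ k, y 0 (i,j) (inl k) = 1 := by
    intro j
    have h2 := hG 1 (inr (inr j))
    rw [Fintype.sum_prod_type] at h2
    have h3 : ∀ i', ∑ j', y 1 (i',j') (inr (inr j)) = ∑ k, y 0 (i',j) (inl k) := by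
      intro i'
      rw [Finset.sum_eq_single j
        (fun j' _ hne => hoffcol 1 (i',j') j (by simpa using hne.symm)) (by simp)]
      exact hcol1 (i',j)
    rw [Finset.sum_congr rfl fun i' _ => h3 i'] at h2
    simpa [margG] using h2
  refine ⟨fun i j k => hy0 0 (i,j) (inl k),
    fun i j k => by have := hdom (i,j) k; have := hy0 1 (i,j) (inl k); linarith,
    hi', hj', hk', ?_⟩
  funext t a g
  match g with
  | inl k =>
    fin_cases t <;> simp [fwd]
    · have := hdom a k; linarith
    · exact (h20 a k).symm
  | inr (inl i) =>
    rcases eq_or_ne i a.1 with rfl | hne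
    · fin_cases t
      · simp only [fwd, if_pos rfl]
        norm_num
        exact (hrow0 a).symm
      · simp only [fwd, if_pos rfl]
        norm_num
        exact (h1row a _).symm
      · simp only [fwd, if_pos rfl]
        norm_num
        exact (hrow2 a).symm
    · simp only [fwd, if_neg hne]
      exact (hoffrow t a i hne).symm
  | inr (inr j) =>
    rcases eq_or_ne j a.2 with rfl | hne
    · fin_cases t
      · simp only [fwd, if_pos rfl]
        norm_num
        exact (h0col a _).symm
      · simp only [fwd, if_pos rfl]
        norm_num
        exact (hcol1 a).symm
      · simp only [fwd, if_pos rfl]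
        norm_num
        exact (hcol2 a).symm
    · simp only [fwd, if_neg hne]
      exact (hoffcol t a j hne).symm

def fwdN (n : ℕ) (p : Fin n → Fin n → Fin n → ℕ) (x : Fin n → Fin n → Fin n → ℕ) :
    Fin 3 → Fin n × Fin n → (Fin n ⊕ Fin n ⊕ Fin n) → ℕ := fun t a g =>
  match g with
  | inl k => if t = 0 then x a.1 a.2 k
      else if t = 1 then p a.1 a.2 k - x a.1 a.2 k else 0
  | inr (inl i) => if i = a.1 then
      (if t = 0 then 1 - ∑ k, x a.1 a.2 k else if t = 1 then 0
        else ∑ k, x a.1 a.2 k) else 0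
  | inr (inr j) => if j = a.2 then
      (if t = 0 then 0 else if t = 1 then ∑ k, x a.1 a.2 k
        else 1 - ∑ k, x a.1 a.2 k) else 0

lemma fwdN_cast {n : ℕ} (p x : Fin n → Fin n → Fin n → ℕ)
    (hle : ∀ i j k, x i j k ≤ p i j k) (hs : ∀ i j, ∑ k, x i j k ≤ 1) :
    ∀ t a g, (fwdN n p x t a g : ℝ) =
      fwd n p (fun i j k => (x i j k : ℝ)) t a g := by
  intro t a g
  have hcast : ∀ i j, ((∑ k, x i j k : ℕ) : ℝ) = ∑ k, (x i j k : ℝ) := by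
    intro i j; push_cast; rfl
  match g with
  | inl k =>
    fin_cases t <;> simp [fwdN, fwd] <;>
      push_cast [Nat.cast_sub (hle a.1 a.2 k)] <;> ring
  | inr (inl i) =>
    fin_cases t <;> simp only [fwdN, fwd] <;> split_ifs <;>
      push_cast [Nat.cast_sub (hs a.1 a.2)] <;> simp
  | inr (inr j) =>
    fin_cases t <;> simp only [fwdN, fwd] <;> split_ifs <;>
      push_cast [Nat.cast_sub (hs a.1 a.2)] <;> simp


open Sum in
/-- The reduction from 3-dimensional matching: dominated arrays with all
1-marginals 1 are in integer preserving bijection with slim (3,n²,3n)-arrays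
with the constructed 2-marginals; hence a matching dominated by p exists iff
an integer slim table with the constructed 2-marginals exists. -/
theorem matching_reduction (n : ℕ) (p : Fin n → Fin n → Fin n → ℕ)
    (hp : ∀ i j k, p i j k ≤ 1) (hk : ∀ k, 1 ≤ ∑ i, ∑ j, p i j k) :
    ∃ e : {x : Fin n → Fin n → Fin n → ℝ //
            (∀ i j k, 0 ≤ x i j k) ∧
            (∀ i j k, x i j k ≤ (p i j k : ℝ)) ∧
            (∀ i, ∑ j, ∑ k, x i j k = 1) ∧
            (∀ j, ∑ i, ∑ k, x i j k = 1) ∧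
            (∀ k, ∑ i, ∑ j, x i j k = 1)} ≃
         {y : Fin 3 → Fin n × Fin n → (Fin n ⊕ Fin n ⊕ Fin n) → ℝ //
            (∀ t a g, 0 ≤ y t a g) ∧
            (∀ t a, ∑ g, y t a g = margT n n n (fun _ => 1) (fun _ => 1) p t a) ∧
            (∀ t g, ∑ a, y t a g =
              margG n n n (fun _ => 1) (fun _ => 1) (fun _ => 1) p t g) ∧
            (∀ a g, ∑ t, y t a g = margA n n n (fun _ => 1) (fun _ => 1) p a g)},
      (∀ x i j k, x.1 i j k = (e x).1 0 (i, j) (inl k)) ∧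
      (∀ x, (∀ i j k, ∃ m : ℤ, x.1 i j k = (m : ℝ)) ↔
        (∀ t a g, ∃ m : ℤ, (e x).1 t a g = (m : ℝ))) ∧
      ((∃ x : Fin n → Fin n → Fin n → ℕ,
          (∀ i j k, x i j k ≤ p i j k) ∧
          (∀ i, ∑ j, ∑ k, x i j k = 1) ∧
          (∀ j, ∑ i, ∑ k, x i j k = 1) ∧
          (∀ k, ∑ i, ∑ j, x i j k = 1)) ↔
        (∃ y : Fin 3 → Fin n × Fin n → (Fin n ⊕ Fin n ⊕ Fin n) → ℕ,
          (∀ t a, ∑ g, (y t a g : ℝ) = margT n n n (fun _ => 1) (fun _ => 1) p t a) ∧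
          (∀ t g, ∑ a, (y t a g : ℝ) =
            margG n n n (fun _ => 1) (fun _ => 1) (fun _ => 1) p t g) ∧
          (∀ a g, ∑ t, (y t a g : ℝ) = margA n n n (fun _ => 1) (fun _ => 1) p a g))) := by
  classical
  refine ⟨⟨fun x => ⟨fwd n p x.1,
      fwd_mem p x.1 x.2.1 x.2.2.1 x.2.2.2.1 x.2.2.2.2.1 x.2.2.2.2.2⟩,
    fun y => ⟨fun i j k => y.1 0 (i,j) (inl k), by
      obtain ⟨h1, h2, h3, h4, h5, _⟩ :=
        bwd_spec p y.1 y.2.1 y.2.2.1 y.2.2.2.1 y.2.2.2.2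
      exact ⟨h1, h2, h3, h4, h5⟩⟩,
    fun x => Subtype.ext (by funext i j k; rfl),
    fun y => Subtype.ext
      ((bwd_spec p y.1 y.2.1 y.2.2.1 y.2.2.2.1 y.2.2.2.2).2.2.2.2.2)⟩,
    fun x i j k => rfl, ?_, ?_⟩
  · intro x
    constructor
    · intro hx t a g
      choose m hm using hx
      have hs : ∀ b : Fin n × Fin n,
          ∑ k, x.1 b.1 b.2 k = ∑ k, ((m b.1 b.2 k : ℤ) : ℝ) :=
        fun b => Finset.sum_congr rfl fun k _ => hm b.1 b.2 k
      show ∃ mm : ℤ, fwd n p x.1 t a g = (mm : ℝ)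
      match g with
      | inl k =>
        refine ⟨if t = 0 then m a.1 a.2 k
          else if t = 1 then (p a.1 a.2 k : ℤ) - m a.1 a.2 k else 0, ?_⟩
        simp only [fwd]
        split_ifs <;> push_cast <;> simp [hm a.1 a.2 k]
      | inr (inl i) =>
        refine ⟨if i = a.1 then
          (if t = 0 then 1 - ∑ k, m a.1 a.2 k else if t = 1 then 0
            else ∑ k, m a.1 a.2 k) else 0, ?_⟩
        simp only [fwd]
        split_ifs <;> push_cast <;> simp [hs a]
      | inr (inr j) =>
        refine ⟨if j = a.2 then
          (if t = 0 then 0 else if t = 1 then ∑ k, m a.1 a.2 k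
            else 1 - ∑ k, m a.1 a.2 k) else 0, ?_⟩
        simp only [fwd]
        split_ifs <;> push_cast <;> simp [hs a]
    · intro hy i j k
      exact hy 0 (i,j) (inl k)
  · constructor
    · rintro ⟨xN, hxle, hxi, hxj, hxk⟩
      have hsle : ∀ i j, ∑ k, xN i j k ≤ 1 := by
        intro i j
        calc ∑ k, xN i j k ≤ ∑ j', ∑ k, xN i j' k :=
              Finset.single_le_sum (f := fun j' => ∑ k, xN i j' k)
                (fun _ _ => Nat.zero_le _) (Finset.mem_univ j)
          _ = 1 := hxi i
      have hmem := fwd_mem p (fun i j k => (xN i j k : ℝ))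
        (fun i j k => by positivity) (fun i j k => Nat.cast_le.2 (hxle i j k))
        (fun i => by exact_mod_cast hxi i) (fun j => by exact_mod_cast hxj j)
        (fun k => by exact_mod_cast hxk k)
      have hc := fwdN_cast p xN hxle hsle
      refine ⟨fwdN n p xN, fun t a => ?_, fun t g => ?_, fun a g => ?_⟩
      · rw [Finset.sum_congr rfl fun g _ => hc t a g]; exact hmem.2.1 t a
      · rw [Finset.sum_congr rfl fun a _ => hc t a g]; exact hmem.2.2.1 t g
      · rw [Finset.sum_congr rfl fun t _ => hc t a g]; exact hmem.2.2.2 a g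
    · rintro ⟨yN, hT', hG', hA'⟩
      obtain ⟨h1, h2, h3, h4, h5, _⟩ := bwd_spec p (fun t a g => (yN t a g : ℝ))
        (fun t a g => by positivity) hT' hG' hA'
      exact ⟨fun i j k => yN 0 (i,j) (inl k),
        fun i j k => by exact_mod_cast h2 i j k,
        fun i => by exact_mod_cast h3 i,
        fun j => by exact_mod_cast h4 j,
        fun k => by exact_mod_cast h5 k⟩
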